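/- For a random variable X with mean μ and variance σ², and real numbers t < μ, define the quadratic M(x) = λ₀ + λ₁x + λ₂x² with λ₂ > 0 and suppose M(x) ≥ 0 for all x < t and M(x) ≥ x − λ₃ for all x ≥ t, and λ₀ + λ₁μ + λ₂(σ²+μ²) ≤ 0. Then for any such X with P(X ≥ t) > 0, E[X·1_{X≥t}] ≤ λ₃·P(X ≥ t). -/

import Mathlib

open MeasureTheory

theorem stmt12 (P : Measure ℝ) [IsProbabilityMeasure P] (m v t l0 l1 l2 l3 : ℝ)
    (hX : Integrable (fun x => x) P) (hX2 : Integrable (fun x => x ^ 2) P)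
    (hmean : ∫ x, x ∂P = m) (hm2 : ∫ x, x ^ 2 ∂P = v + m ^ 2)
    (hl2 : 0 < l2) (ht : t < m)
    (hM1 : ∀ x < t, 0 ≤ l0 + l1 * x + l2 * x ^ 2)
    (hM2 : ∀ x, t ≤ x → x - l3 ≤ l0 + l1 * x + l2 * x ^ 2)
    (hfeas : l0 + l1 * m + l2 * (v + m ^ 2) ≤ 0)
    (hpos : 0 < (P {x : ℝ | t ≤ x}).toReal) :
    ∫ x in {x : ℝ | t ≤ x}, x ∂P ≤ l3 * (P {x : ℝ | t ≤ x}).toReal := by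
  set s : Set ℝ := {x : ℝ | t ≤ x} with hs
  have hsm : MeasurableSet s := measurableSet_le measurable_const measurable_id
  have hfi : Integrable (fun x => l0 + l1 * x + l2 * x ^ 2) P := by
    apply Integrable.add
    · exact (integrable_const l0).add (hX.const_mul l1)
    · exact hX2.const_mul l2
  have hgi : Integrable (fun x => x - l3) P := hX.sub (integrable_const l3)
  have hgind : Integrable (s.indicator (fun x => x - l3)) P :=
    hgi.indicator hsm
  have hmono : ∀ x, s.indicator (fun x => x - l3) x ≤ l0 + l1 * x + l2 * x ^ 2 := by
    intro x
    by_cases hx : x ∈ s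
    · rw [Set.indicator_of_mem hx]
      exact hM2 x hx
    · rw [Set.indicator_of_notMem hx]
      exact hM1 x (lt_of_not_ge hx)
  have hineq : ∫ x, s.indicator (fun x => x - l3) x ∂P ≤
      ∫ x, (l0 + l1 * x + l2 * x ^ 2) ∂P :=
    integral_mono hgind hfi hmono
  have h1 : ∫ x, (l0 + l1 * x) ∂P = l0 + l1 * m := by
    rw [integral_add (integrable_const l0) (hX.const_mul l1),
        integral_const, integral_const_mul, hmean]
    simp
  have hrhs : ∫ x, (l0 + l1 * x + l2 * x ^ 2) ∂P = l0 + l1 * m + l2 * (v + m ^ 2) := by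
    have ha : Integrable (fun x => l0 + l1 * x) P := (integrable_const l0).add (hX.const_mul l1)
    rw [integral_add ha (hX2.const_mul l2), h1, integral_const_mul, hm2]
  have hlhs : ∫ x, s.indicator (fun x => x - l3) x ∂P =
      (∫ x in s, x ∂P) - l3 * (P s).toReal := by
    rw [integral_indicator hsm, integral_sub (hX.restrict) (integrable_const l3),
        setIntegral_const]
    ring_nf
    simp [mul_comm, Measure.real]
  rw [hlhs, hrhs] at hineq
  linarith
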